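/- Let j ≥ 1 and let G be a graph whose vertex set partitions into D = {a,b,c,d,e} and a nonempty set R with |R| = j such that: the edges inside D are exactly ab, ac, ad, be (so D induces the graph F_3); every vertex of R is adjacent to a and to b and to no other vertex of D; and the edges inside R are arbitrary. Then G is not L-integral. -/
import Mathlib

open SimpleGraph Polynomial

/-- A finite simple graph is `L`-integral if every eigenvalue of its Laplacian
matrix (over `ℝ`) is an integer. -/
def LIntegral {V : Type*} [Fintype V] [DecidableEq V] (G : SimpleGraph V)
    [DecidableRel G.Adj] : Prop :=
  ∀ μ ∈ spectrum ℝ (G.lapMatrix ℝ), ∃ z : ℤ, μ = (z : ℝ)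

/-- The graph obtained from `F₃` (vertices `a,b,c,d,e = 0,1,2,3,4`, edges
`ab, ac, ad, be`) by adding a nonempty set `R` of vertices, each adjacent exactly
to the midpoints `a` and `b`, with the edges inside `R` given by `H`. -/
def F3Ext (j : ℕ) (H : SimpleGraph (Fin j)) : SimpleGraph (Fin 5 ⊕ Fin j) :=
  SimpleGraph.fromRel (fun u v =>
    (u = Sum.inl 0 ∧ v = Sum.inl 1) ∨ (u = Sum.inl 0 ∧ v = Sum.inl 2) ∨
    (u = Sum.inl 0 ∧ v = Sum.inl 3) ∨ (u = Sum.inl 1 ∧ v = Sum.inl 4) ∨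
    (∃ r : Fin j, (u = Sum.inl 0 ∨ u = Sum.inl 1) ∧ v = Sum.inr r) ∨
    (∃ r s : Fin j, H.Adj r s ∧ u = Sum.inr r ∧ v = Sum.inr s))

namespace F3Aux
open Matrix Finset

/-- The reduced characteristic polynomial of the invariant subspace. -/
def pp (c μ : ℝ) : ℝ :=
  μ^4 - (9+2*c)*μ^3 + (27+11*c+c^2)*μ^2 - (31+16*c+2*c^2)*μ + (10+7*c+c^2)

lemma exists_root (c : ℝ) (hc : 0 ≤ c) : ∃ μ ∈ Set.Ioo (0:ℝ) 1, pp c μ = 0 := by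
  have h0 : 0 < pp c 0 := by simp only [pp]; nlinarith
  have h1 : pp c 1 < 0 := by simp only [pp]; nlinarith
  have hcont : ContinuousOn (pp c) (Set.Icc 0 1) := by
    apply Continuous.continuousOn; unfold pp; fun_prop
  obtain ⟨μ, hμ, hval⟩ := intermediate_value_Ioo' (by norm_num : (0:ℝ) ≤ 1) hcont
    (Set.mem_Ioo.mpr ⟨h1, h0⟩)
  exact ⟨μ, hμ, hval⟩

/-- Components of the eigenvector. -/
def va (c μ : ℝ) : ℝ := (1-μ)^2*(2-μ)*(2-μ+c)
def vB (c μ : ℝ) : ℝ := (3+c-μ)*(1-μ)*(2-μ)-2*(2-μ)-c*(1-μ)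
def vb (c μ : ℝ) : ℝ := (1-μ)*(2-μ)*(vB c μ)
def vs (c μ : ℝ) : ℝ := (1-μ)*(2-μ)*(2-μ+c)
def ve (c μ : ℝ) : ℝ := (2-μ)*(vB c μ)
def vt (c μ : ℝ) : ℝ := (1-μ)*((1-μ)*(2-μ+c)+(vB c μ))

/-- The eigenvector on `Fin 5 ⊕ Fin j`. -/
def X (j : ℕ) (c μ : ℝ) : Fin 5 ⊕ Fin j → ℝ :=
  Sum.elim ![va c μ, vb c μ, vs c μ, vs c μ, ve c μ] (fun _ => vt c μ)

variable {j : ℕ} {H : SimpleGraph (Fin j)}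

lemma adj_inl_inr (i : Fin 5) (r : Fin j) :
    (F3Ext j H).Adj (.inl i) (.inr r) ↔ (i = 0 ∨ i = 1) := by
  simp [F3Ext, fromRel_adj]

lemma adj_inr_inl (i : Fin 5) (r : Fin j) :
    (F3Ext j H).Adj (.inr r) (.inl i) ↔ (i = 0 ∨ i = 1) := by
  rw [SimpleGraph.adj_comm]; exact adj_inl_inr i r

lemma adj_inr_inr (r s : Fin j) : (F3Ext j H).Adj (.inr r) (.inr s) ↔ H.Adj r s := by
  constructor
  · rintro ⟨hne, h | h⟩ <;> simp_all [F3Ext, fromRel_adj]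
    exact h.symm
  · intro h; exact ⟨by simp [h.ne], by simp [F3Ext]; tauto⟩

lemma lap_row {V : Type*} [Fintype V] [DecidableEq V] (G : SimpleGraph V) [DecidableRel G.Adj]
    (x : V → ℝ) (u : V) :
    (G.lapMatrix ℝ *ᵥ x) u = ∑ w, if G.Adj u w then x u - x w else 0 := by
  rw [SimpleGraph.lapMatrix_mulVec_apply]
  have hd : (G.degree u : ℝ) = ∑ w, if G.Adj u w then (1:ℝ) else 0 := by
    rw [Finset.sum_boole]
    simp [SimpleGraph.degree, SimpleGraph.neighborFinset_eq_filter]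
  have hs : ∑ w ∈ G.neighborFinset u, x w = ∑ w, if G.Adj u w then x w else 0 := by
    rw [SimpleGraph.neighborFinset_eq_filter, Finset.sum_filter]
  rw [hd, hs, Finset.sum_mul, ← Finset.sum_sub_distrib]
  exact Finset.sum_congr rfl fun w _ => by split_ifs <;> ring

open scoped Classical in
lemma eigen (c μ : ℝ) (hc : c = (j:ℝ)) (hpp : pp c μ = 0) (u : Fin 5 ⊕ Fin j) :
    (∑ w, if (F3Ext j H).Adj u w then X j c μ u - X j c μ w else 0) = μ * X j c μ u := by
  simp only [pp] at hpp
  rw [Fintype.sum_sum_type]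
  obtain i | r := u
  · have hconst : ∀ y : ℝ, ∑ _r : Fin j, y = c * y := by
      intro y; rw [Finset.sum_const, Finset.card_univ, Fintype.card_fin, nsmul_eq_mul, hc]
    fin_cases i <;>
      simp only [X, Sum.elim_inl, Sum.elim_inr, adj_inl_inr, Fin.sum_univ_five,
        Matrix.cons_val_zero, Matrix.cons_val_one, Matrix.head_cons, Matrix.cons_val_two,
        Matrix.tail_cons, Matrix.cons_val_three, Matrix.cons_val_four] <;>
      simp +decide [F3Ext, fromRel_adj, hconst, Fin.ext_iff] <;>
      · simp only [va, vb, vs, ve, vt, vB]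
        try linear_combination (μ*(2-μ)) * hpp
        try linear_combination (-(μ*(2-μ))) * hpp
        try ring
  · simp only [X, Sum.elim_inl, Sum.elim_inr, adj_inr_inl, adj_inr_inr, Fin.sum_univ_five,
      Matrix.cons_val_zero, Matrix.cons_val_one, Matrix.head_cons]
    rw [Finset.sum_eq_zero (fun w _ => by split_ifs <;> simp)]
    simp +decide [Fin.ext_iff]
    simp only [va, vb, vs, ve, vt, vB]
    ring

end F3Aux

open F3Aux Matrix in
/-- A graph consisting of `F₃` together with a nonempty set of extra vertices, each
adjacent exactly to the two midpoints of `F₃`, is not `L`-integral. -/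
theorem F3Ext_not_LIntegral {V : Type*} [Fintype V] [DecidableEq V]
    (G : SimpleGraph V) [DecidableRel G.Adj] (j : ℕ) (hj : 1 ≤ j)
    (H : SimpleGraph (Fin j)) (h : Nonempty (G ≃g F3Ext j H)) :
    ¬ LIntegral G := by
  classical
  obtain ⟨e⟩ := h
  set c : ℝ := (j : ℝ) with hc
  obtain ⟨μ, ⟨hμ0, hμ1⟩, hpp⟩ := exists_root c (by positivity)
  set y : V → ℝ := fun u => X j c μ (e u) with hy_def
  have hy : G.lapMatrix ℝ *ᵥ y = μ • y := by
    funext u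
    rw [lap_row]
    rw [Fintype.sum_equiv e.toEquiv (fun w => if G.Adj u w then y u - y w else 0)
      (fun w' => if (F3Ext j H).Adj (e u) w' then X j c μ (e u) - X j c μ w' else 0)
      (fun w => if_congr (e.map_adj_iff).symm rfl rfl)]
    exact (eigen c μ hc hpp (e u)).trans rfl
  have hva : 0 < va c μ := by
    have h1 : (0:ℝ) < 1 - μ := by linarith
    have h2 : (0:ℝ) < 2 - μ := by linarith
    have h3 : (0:ℝ) < 2 - μ + c := by
      have hc0 : (0:ℝ) ≤ c := Nat.cast_nonneg j
      linarith
    unfold va; positivity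
  have hy0 : y ≠ 0 := by
    intro h0
    have : y (e.symm (Sum.inl 0)) = 0 := by rw [h0]; rfl
    rw [hy_def] at this
    simp only [RelIso.apply_symm_apply] at this
    rw [show X j c μ (Sum.inl 0) = va c μ from rfl] at this
    exact hva.ne' this
  have hdet : ((μ • (1 : Matrix V V ℝ)) - G.lapMatrix ℝ).det = 0 := by
    rw [← Matrix.exists_mulVec_eq_zero_iff]
    refine ⟨y, hy0, ?_⟩
    rw [Matrix.sub_mulVec, Matrix.smul_mulVec, Matrix.one_mulVec, hy, sub_self]
  have hmem : μ ∈ spectrum ℝ (G.lapMatrix ℝ) := by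
    rw [spectrum.mem_iff]
    intro hunit
    rw [Matrix.isUnit_iff_isUnit_det] at hunit
    rw [Algebra.algebraMap_eq_smul_one, hdet] at hunit
    exact (not_isUnit_zero hunit).elim
  intro hL
  obtain ⟨z, hz⟩ := hL μ hmem
  rw [hz] at hμ0 hμ1
  have h1 : (0:ℤ) < z := by exact_mod_cast hμ0
  have h2 : z < 1 := by exact_mod_cast hμ1
  omega
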